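/- Let c be a configuration of K_n (n ≥ 2) with sorted chip counts c₁ ≥ … ≥ c_n, all at most n−1, that is not volatile. Then there exists an index i with c_i ≤ n−i−1, and the number of additional chips needed to make the configuration volatile is exactly Σ_{i=1}^{n} max(n−i−c_i, 0). -/

import Mathlib

/-- Firing vertex `v` in `K_n`: remove `n-1` chips from `v`, add one chip to each other vertex. -/
def fireK (n : ℕ) (c : Fin n → ℕ) (v : Fin n) : Fin n → ℕ :=
  fun u => if u = v then c v - (n - 1) else c u + 1

/-- Configuration after firing `f 0, …, f (m-1)` in order in `K_n`. -/
def fireIterK (n : ℕ) (c : Fin n → ℕ) (f : ℕ → Fin n) : ℕ → Fin n → ℕ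
  | 0 => c
  | m + 1 => fireK n (fireIterK n c f m) (f m)

/-- A configuration of `K_n` is volatile if it admits an infinite legal firing sequence. -/
def VolatileK (n : ℕ) (c : Fin n → ℕ) : Prop :=
  ∃ f : ℕ → Fin n, ∀ m : ℕ, n - 1 ≤ fireIterK n c f m (f m)

/-- Configuration after firing a finite list of vertices in order in `K_n`. -/
def fireListK (n : ℕ) : (Fin n → ℕ) → List (Fin n) → (Fin n → ℕ)
  | c, [] => c
  | c, v :: l => fireListK n (fireK n c v) l

/-- A finite firing list in `K_n` is legal if each fired vertex has at least `n-1` chips. -/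
def LegalListK (n : ℕ) : (Fin n → ℕ) → List (Fin n) → Prop
  | _, [] => True
  | c, v :: l => n - 1 ≤ c v ∧ LegalListK n (fireK n c v) l

/-- Sufficiency: if every vertex `v` has at least `n-1-v` chips, the config is volatile. -/
lemma suffK (n : ℕ) (hn : 2 ≤ n) (d : Fin n → ℕ) (hd : ∀ v : Fin n, n - 1 ≤ d v + v) :
    VolatileK n d := by
  have hnpos : 0 < n := by omega
  set f : ℕ → Fin n := fun m => ⟨m % n, Nat.mod_lt _ hnpos⟩ with hf
  have key : ∀ m : ℕ, fireIterK n d f m =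
      fun u => d u + m % n - (if (u:ℕ) < m % n then n else 0) := by
    intro m
    induction m with
    | zero => funext u; simp [fireIterK]
    | succ m ih =>
      have hr : m % n < n := Nat.mod_lt _ hnpos
      have hsucc : (m + 1) % n = (m % n + 1) % n := by
        conv_lhs => rw [Nat.add_mod, Nat.mod_eq_of_lt (show 1 < n by omega)]
      have hs2 : (m + 1) % n = if m % n + 1 = n then 0 else m % n + 1 := by
        rw [hsucc]; split_ifs with h
        · rw [h, Nat.mod_self]
        · exact Nat.mod_eq_of_lt (by omega)
      funext u
      have hdu := hd u
      have hu := u.isLt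
      have hdfm := hd (f m)
      have hXu := congrFun ih u
      have hXv := congrFun ih (f m)
      have hfv : ((f m : Fin n) : ℕ) = m % n := rfl
      show fireK n (fireIterK n d f m) (f m) u = _
      unfold fireK
      by_cases h : u = f m
      · subst h
        rw [if_pos rfl, hXv, hs2]
        simp only [hfv]
        split_ifs <;> omega
      · rw [if_neg h, hXu, hs2]
        have huv : (u:ℕ) ≠ m % n := fun hh => h (Fin.ext (hh.trans hfv.symm))
        split_ifs <;> omega
  refine ⟨f, fun m => ?_⟩
  have hXv := congrFun (key m) (f m)
  rw [hXv]
  have hfv : ((f m : Fin n) : ℕ) = m % n := rfl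
  simp only [hfv]
  rw [if_neg (lt_irrefl _)]
  have := hd (f m)
  omega

/-- Conservation-style exact formula along a legal firing sequence. -/
lemma formulaK (n : ℕ) (c : Fin n → ℕ) (f : ℕ → Fin n)
    (hf : ∀ i, n - 1 ≤ fireIterK n c f i (f i)) :
    ∀ m u, fireIterK n c f m u
      + n * ((Finset.range m).filter (fun i => f i = u)).card = c u + m := by
  intro m
  induction m with
  | zero => intro u; simp [fireIterK]
  | succ m ih =>
    intro u
    have hleg := hf m
    have ihu := ih u
    have hcard : ((Finset.range (m+1)).filter (fun i => f i = u)).card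
        = ((Finset.range m).filter (fun i => f i = u)).card
          + (if f m = u then 1 else 0) := by
      rw [Finset.range_add_one, Finset.filter_insert]
      split_ifs with h
      · rw [Finset.card_insert_of_notMem (by simp)]
      · simp
    rw [hcard]
    show fireK n (fireIterK n c f m) (f m) u + _ = _
    unfold fireK
    set k := ((Finset.range m).filter (fun i => f i = u)).card with hk
    by_cases h : f m = u
    · rw [if_pos h.symm, if_pos h, ← h]
      rw [← h] at ihu
      have hmul : n * (k + 1) = n * k + n := by ring
      rw [hmul]
      omega
    · rw [if_neg (fun hh : u = f m => h hh.symm), if_neg h, add_zero]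
      omega

/-- Necessity: a volatile configuration capped at `n-1` admits an injection `σ` with
`c (σ j) ≥ n - 1 - j`. -/
lemma necK (n : ℕ) (c : Fin n → ℕ) (hc : ∀ v, c v ≤ n - 1)
    (h : VolatileK n c) :
    ∃ σ : Fin n → Fin n, Function.Injective σ ∧ ∀ j : Fin n, n - 1 ≤ c (σ j) + (j : ℕ) := by
  obtain ⟨f, hf⟩ := h
  have key : ∀ a b : ℕ, a < b → b < n → f a ≠ f b := by
    intro a b hab hbn heq
    have hform := formulaK n c f hf b (f b)
    have hk : 0 < ((Finset.range b).filter (fun i => f i = f b)).card :=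
      Finset.card_pos.mpr ⟨a, by simp [Finset.mem_filter, Finset.mem_range, hab, heq]⟩
    have hmul : n ≤ n * ((Finset.range b).filter (fun i => f i = f b)).card :=
      Nat.le_mul_of_pos_right _ hk
    have hleg := hf b
    have hcb := hc (f b)
    omega
  refine ⟨fun j => f j, ?_, ?_⟩
  · intro a b hab
    by_contra hne
    have hne' : (a:ℕ) ≠ (b:ℕ) := fun hh => hne (Fin.ext hh)
    rcases Nat.lt_or_ge (a:ℕ) (b:ℕ) with hlt | hge
    · exact key a b hlt b.isLt hab
    · exact key b a (by omega) a.isLt hab.symm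
  · intro j
    show n - 1 ≤ c (f (j:ℕ)) + (j:ℕ)
    have hform := formulaK n c f hf j (f j)
    have hzero : ((Finset.range (j:ℕ)).filter (fun i => f i = f (j:ℕ))).card = 0 := by
      rw [Finset.card_eq_zero, Finset.filter_eq_empty_iff]
      intro i hi
      exact key i j (Finset.mem_range.mp hi) j.isLt
    rw [hzero, Nat.mul_zero] at hform
    have hleg := hf j
    omega

lemma card_filter_val_lt (n b : ℕ) :
    (Finset.univ.filter (fun j : Fin n => (j:ℕ) < b)).card = min b n := by
  rcases lt_or_ge b n with h | h
  · have e : Finset.univ.filter (fun j : Fin n => (j:ℕ) < b) = Finset.Iio ⟨b, h⟩ := by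
      ext j; simp [Fin.lt_def]
    rw [e, Fin.card_Iio]; simp; omega
  · have e : Finset.univ.filter (fun j : Fin n => (j:ℕ) < b) = Finset.univ := by
      ext j; simpa using lt_of_lt_of_le j.isLt h
    rw [e]; simp; omega

lemma sub_eq_card (a b N : ℕ) (h : a ≤ N) :
    a - b = ∑ s ∈ Finset.range N, (if b ≤ s ∧ s < a then 1 else 0) := by
  have e : (Finset.range N).filter (fun s => b ≤ s ∧ s < a) = Finset.Ico b a := by
    ext s; simp only [Finset.mem_filter, Finset.mem_range, Finset.mem_Ico]; omega
  rw [← Finset.card_filter, e, Nat.card_Ico]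

lemma perS (n : ℕ) (c : Fin n → ℕ) (hsort : Antitone c) (σ : Fin n → Fin n)
    (hσ : Function.Injective σ) (s : ℕ) :
    (Finset.univ.filter (fun j : Fin n => c j ≤ s ∧ s < n - 1 - (j:ℕ))).card ≤
    (Finset.univ.filter (fun j : Fin n => c (σ j) ≤ s ∧ s < n - 1 - (j:ℕ))).card := by
  classical
  set a := n - 1 - s with ha
  set K := Finset.univ.filter (fun v : Fin n => s < c v) with hK
  set k := K.card with hk
  have hkn : k ≤ n := le_trans (Finset.card_filter_le _ _) (by simp)
  have han : a ≤ n := by omega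
  have hlt : ∀ j : Fin n, (s < n - 1 - (j:ℕ)) ↔ (j:ℕ) < a := by
    intro j; omega
  have hmem : ∀ j : Fin n, c j ≤ s ↔ k ≤ (j:ℕ) := by
    intro j
    constructor
    · intro hcj
      by_contra hjk
      push_neg at hjk
      have hsub : K ⊆ Finset.univ.filter (fun v : Fin n => (v:ℕ) < (j:ℕ)) := by
        intro v hv
        simp only [hK, Finset.mem_filter, Finset.mem_univ, true_and] at hv ⊢
        by_contra hle
        push_neg at hle
        have hvc : c v ≤ c j := hsort (Fin.le_def.mpr hle)
        omega
      have hcard := Finset.card_le_card hsub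
      rw [card_filter_val_lt] at hcard
      have := j.isLt
      omega
    · intro hkj
      by_contra hcj
      push_neg at hcj
      have hsub : Finset.univ.filter (fun v : Fin n => (v:ℕ) < (j:ℕ) + 1) ⊆ K := by
        intro v hv
        simp only [hK, Finset.mem_filter, Finset.mem_univ, true_and] at hv ⊢
        have hvj : v ≤ j := Fin.le_def.mpr (by omega)
        exact lt_of_lt_of_le hcj (hsort hvj)
      have hcard := Finset.card_le_card hsub
      rw [card_filter_val_lt] at hcard
      have := j.isLt
      omega
  have hsumI := Finset.card_filter_add_card_filter_not
    (s := Finset.univ.filter (fun j : Fin n => (j:ℕ) < a)) (p := fun j : Fin n => (j:ℕ) < k)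
  rw [Finset.filter_filter, Finset.filter_filter] at hsumI
  have eI : Finset.univ.filter (fun j : Fin n => c j ≤ s ∧ s < n - 1 - (j:ℕ)) =
      Finset.univ.filter (fun j : Fin n => (j:ℕ) < a ∧ ¬ (j:ℕ) < k) := by
    ext j
    simp only [Finset.mem_filter, Finset.mem_univ, true_and]
    rw [hmem j, hlt j]; omega
  have eAK : Finset.univ.filter (fun j : Fin n => (j:ℕ) < a ∧ (j:ℕ) < k) =
      Finset.univ.filter (fun j : Fin n => (j:ℕ) < min a k) := by
    ext j
    simp only [Finset.mem_filter, Finset.mem_univ, true_and]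
    omega
  rw [eAK, card_filter_val_lt, card_filter_val_lt] at hsumI
  have Tid : (Finset.univ.filter (fun j : Fin n => c j ≤ s ∧ s < n - 1 - (j:ℕ))).card = a - k := by
    rw [eI]; omega
  have eS : Finset.univ.filter (fun j : Fin n => c (σ j) ≤ s ∧ s < n - 1 - (j:ℕ)) =
      Finset.univ.filter (fun j : Fin n => (j:ℕ) < a ∧ c (σ j) ≤ s) := by
    ext j
    simp only [Finset.mem_filter, Finset.mem_univ, true_and]
    rw [hlt j]; tauto
  have hsumS := Finset.card_filter_add_card_filter_not
    (s := Finset.univ.filter (fun j : Fin n => (j:ℕ) < a)) (p := fun j : Fin n => c (σ j) ≤ s)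
  rw [Finset.filter_filter, Finset.filter_filter, card_filter_val_lt] at hsumS
  have hbound : ((Finset.univ.filter (fun j : Fin n => (j:ℕ) < a ∧ ¬ c (σ j) ≤ s))).card ≤ k := by
    rw [hk, hK]
    apply Finset.card_le_card_of_injOn σ
    · intro j hj
      simp only [Finset.mem_coe, Finset.mem_filter, Finset.mem_univ, true_and] at hj ⊢
      omega
    · exact fun x _ y _ hxy => hσ hxy
  rw [eS, Tid]
  omega

lemma lemA (n : ℕ) (c : Fin n → ℕ) (hsort : Antitone c) (σ : Fin n → Fin n)
    (hσ : Function.Injective σ) :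
    ∑ j : Fin n, (n - 1 - (j:ℕ) - c j) ≤ ∑ j : Fin n, (n - 1 - (j:ℕ) - c (σ j)) := by
  have expand : ∀ b : Fin n → ℕ, ∑ j : Fin n, (n - 1 - (j:ℕ) - b j)
      = ∑ s ∈ Finset.range n,
          (Finset.univ.filter (fun j : Fin n => b j ≤ s ∧ s < n - 1 - (j:ℕ))).card := by
    intro b
    have h1 : ∀ j : Fin n, n - 1 - (j:ℕ) - b j
        = ∑ s ∈ Finset.range n, (if b j ≤ s ∧ s < n - 1 - (j:ℕ) then 1 else 0) :=
      fun j => sub_eq_card _ _ _ (by omega)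
    rw [Finset.sum_congr rfl (fun j _ => h1 j), Finset.sum_comm]
    exact Finset.sum_congr rfl (fun s _ => (Finset.card_filter _ _).symm)
  rw [expand c, expand (fun j => c (σ j))]
  exact Finset.sum_le_sum (fun s _ => perS n c hsort σ hσ s)

/-- If `c` is a non-volatile configuration of `K_n` (`n ≥ 2`) with sorted
counts `c₁ ≥ … ≥ c_n`, all at most `n-1`, then some index `i` has `cᵢ ≤ n - i - 1`
(0-indexed: `c i + i + 2 ≤ n`), and the minimum number of additional chips needed to make
the configuration volatile (keeping all counts at most `n-1`) is exactly
`∑ᵢ max(n - i - cᵢ, 0)` (0-indexed: `∑ᵢ (n - 1 - i - cᵢ)` with truncated subtraction). -/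
theorem stmt17 (n : ℕ) (hn : 2 ≤ n) (c : Fin n → ℕ) (hsort : Antitone c)
    (hc : ∀ v, c v ≤ n - 1) (hnvol : ¬ VolatileK n c) :
    (∃ i : Fin n, c i + (i : ℕ) + 2 ≤ n) ∧
    IsLeast
      {k : ℕ | ∃ d : Fin n → ℕ, (∀ v, c v ≤ d v) ∧ (∀ v, d v ≤ n - 1) ∧
        VolatileK n d ∧ k = ∑ v, (d v - c v)}
      (∑ i : Fin n, (n - 1 - (i : ℕ) - c i)) := by
  have hex : ∃ i : Fin n, c i + (i : ℕ) + 2 ≤ n := by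
    by_contra h
    push_neg at h
    exact hnvol (suffK n hn c (fun v => by have := h v; omega))
  refine ⟨hex, ?_, ?_⟩
  · refine ⟨fun v => max (c v) (n - 1 - (v:ℕ)), fun v => le_max_left _ _,
      fun v => max_le (hc v) (by omega),
      suffK n hn _ (fun v => by
        have h1 := v.isLt
        have h2 := le_max_right (c v) (n - 1 - (v:ℕ))
        omega), ?_⟩
    apply Finset.sum_congr rfl
    intro v _
    show n - 1 - (v:ℕ) - c v = max (c v) (n - 1 - (v:ℕ)) - c v
    rcases le_total (c v) (n - 1 - (v:ℕ)) with h | h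
    · rw [max_eq_right h]
    · rw [max_eq_left h]; omega
  · intro kk hkk
    obtain ⟨d, hcd, hdcap, hdvol, rfl⟩ := hkk
    obtain ⟨σ, hσ, hσd⟩ := necK n d hdcap hdvol
    have hbij : Function.Bijective σ := Finite.injective_iff_bijective.mp hσ
    calc ∑ i : Fin n, (n - 1 - (i:ℕ) - c i)
        ≤ ∑ j : Fin n, (n - 1 - (j:ℕ) - c (σ j)) := lemA n c hsort σ hσ
      _ ≤ ∑ j : Fin n, (d (σ j) - c (σ j)) := Finset.sum_le_sum (fun j _ => by
          have h1 := hσd j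
          have h2 := hcd (σ j)
          omega)
      _ = ∑ v, (d v - c v) := Equiv.sum_comp (Equiv.ofBijective σ hbij) (fun v => d v - c v)
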